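/- Let H be a free abelian group with basis x₁,...,x_{2g} (g ≥ 1), embed Λ²H into H⊗H by a∧b ↦ a⊗b − b⊗a, and hence H⊗Λ²H into H^{⊗3}. Let ω = Σ_{i=1}^g x_{2i-1}∧x_{2i}. Then the subgroup of H^{⊗3} consisting of elements a⊗ω for a ∈ H intersects trivially the subgroup Λ³H of H^{⊗3} spanned by all alternating sums Σ_{σ∈S₃} sgn(σ) a_{σ(1)}⊗a_{σ(2)}⊗a_{σ(3)}. -/

import Mathlib

open TensorProduct

/-- Coefficient functional picking out the `x_j ⊗ x_k ⊗ x_l` coefficient. -/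
noncomputable def coeff3 (n : ℕ) (j k l : Fin n) :
    ((Fin n → ℤ) ⊗[ℤ] ((Fin n → ℤ) ⊗[ℤ] (Fin n → ℤ))) →ₗ[ℤ] ℤ :=
  TensorProduct.lift (((LinearMap.mul ℤ ℤ).comp (LinearMap.proj j)).compl₂
    (TensorProduct.lift (((LinearMap.mul ℤ ℤ).comp (LinearMap.proj k)).compl₂
      (LinearMap.proj l))))

@[simp] lemma coeff3_tmul (n : ℕ) (j k l : Fin n) (a b c : Fin n → ℤ) :
    coeff3 n j k l (a ⊗ₜ[ℤ] (b ⊗ₜ[ℤ] c)) = a j * (b k * c l) := by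
  erw [coeff3, lift.tmul, LinearMap.compl₂_apply, lift.tmul]
  simp

lemma perm_sum_zero {n : ℕ} (a : Fin 3 → (Fin n → ℤ)) (j l : Fin n) :
    ∑ σ : Equiv.Perm (Fin 3),
      (Equiv.Perm.sign σ : ℤ) * (a (σ 0) j * (a (σ 1) j * a (σ 2) l)) = 0 := by
  set f : Equiv.Perm (Fin 3) → ℤ := fun σ =>
    (Equiv.Perm.sign σ : ℤ) * (a (σ 0) j * (a (σ 1) j * a (σ 2) l)) with hf
  have key : ∀ σ : Equiv.Perm (Fin 3), f (σ * Equiv.swap 0 1) = -f σ := by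
    intro σ
    have hs : (Equiv.Perm.sign (σ * Equiv.swap 0 1) : ℤ) = -(Equiv.Perm.sign σ : ℤ) := by
      rw [Equiv.Perm.sign_mul, Equiv.Perm.sign_swap (by decide)]
      push_cast
      ring
    simp only [hf, Equiv.Perm.mul_apply, hs]
    have h0 : Equiv.swap (0 : Fin 3) 1 0 = 1 := by decide
    have h1 : Equiv.swap (0 : Fin 3) 1 1 = 0 := by decide
    have h2 : Equiv.swap (0 : Fin 3) 1 2 = 2 := by decide
    rw [h0, h1, h2]
    ring
  have hre : ∑ σ, f (σ * Equiv.swap 0 1) = ∑ σ, f σ :=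
    Equiv.sum_comp (Equiv.mulRight (Equiv.swap 0 1)) f
  rw [show (∑ σ, f (σ * Equiv.swap 0 1)) = ∑ σ, -f σ from Finset.sum_congr rfl
    (fun σ _ => key σ), Finset.sum_neg_distrib] at hre
  linarith

/-- **The line `H ⊗ ω` meets `Λ³H` trivially inside `H^{⊗3}`.**
Let `H = ℤ^{2g}` with basis `x₁,…,x_{2g}`, embed `Λ²H` into `H ⊗ H` by
`a∧b ↦ a⊗b − b⊗a`, and let `ω = Σᵢ x_{2i-1} ∧ x_{2i}` (as an element of `H ⊗ H`).
Then the only element of `H^{⊗3}` that is both of the form `a ⊗ ω` (for `a ∈ H`) and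
lies in the span of all full antisymmetrisations
`Σ_{σ∈S₃} sgn(σ)·a_{σ(1)} ⊗ a_{σ(2)} ⊗ a_{σ(3)}` (the image of `Λ³H`) is `0`. -/
theorem statement17 (g : ℕ) (hg : 1 ≤ g) :
    ∀ v : (Fin (2 * g) → ℤ) ⊗[ℤ] ((Fin (2 * g) → ℤ) ⊗[ℤ] (Fin (2 * g) → ℤ)),
      (∃ a : Fin (2 * g) → ℤ,
        v = a ⊗ₜ[ℤ] (∑ i : Fin g,
          ((Pi.single (⟨2 * (i : ℕ), by omega⟩ : Fin (2 * g)) 1 : Fin (2 * g) → ℤ)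
              ⊗ₜ[ℤ] (Pi.single (⟨2 * (i : ℕ) + 1, by omega⟩ : Fin (2 * g)) 1) -
            (Pi.single (⟨2 * (i : ℕ) + 1, by omega⟩ : Fin (2 * g)) 1 : Fin (2 * g) → ℤ)
              ⊗ₜ[ℤ] (Pi.single (⟨2 * (i : ℕ), by omega⟩ : Fin (2 * g)) 1)))) →
      v ∈ Submodule.span ℤ
        {t : (Fin (2 * g) → ℤ) ⊗[ℤ] ((Fin (2 * g) → ℤ) ⊗[ℤ] (Fin (2 * g) → ℤ)) |
          ∃ a : Fin 3 → (Fin (2 * g) → ℤ),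
            t = ∑ σ : Equiv.Perm (Fin 3),
              (Equiv.Perm.sign σ : ℤ) • (a (σ 0) ⊗ₜ[ℤ] (a (σ 1) ⊗ₜ[ℤ] a (σ 2)))} →
      v = 0 := by
  rintro v ⟨a, rfl⟩ hspan
  have hvanish : ∀ (j l : Fin (2 * g)),
      coeff3 (2 * g) j j l (a ⊗ₜ[ℤ] (∑ i : Fin g,
          ((Pi.single (⟨2 * (i : ℕ), by omega⟩ : Fin (2 * g)) 1 : Fin (2 * g) → ℤ)
              ⊗ₜ[ℤ] (Pi.single (⟨2 * (i : ℕ) + 1, by omega⟩ : Fin (2 * g)) 1) -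
            (Pi.single (⟨2 * (i : ℕ) + 1, by omega⟩ : Fin (2 * g)) 1 : Fin (2 * g) → ℤ)
              ⊗ₜ[ℤ] (Pi.single (⟨2 * (i : ℕ), by omega⟩ : Fin (2 * g)) 1)))) = 0 := by
    intro j l
    refine Submodule.span_induction ?_ ?_ ?_ ?_ hspan
    · rintro t ⟨b, rfl⟩
      rw [map_sum]
      rw [show (∑ σ : Equiv.Perm (Fin 3), coeff3 (2*g) j j l
          ((Equiv.Perm.sign σ : ℤ) • (b (σ 0) ⊗ₜ[ℤ] (b (σ 1) ⊗ₜ[ℤ] b (σ 2)))))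
        = ∑ σ : Equiv.Perm (Fin 3),
          (Equiv.Perm.sign σ : ℤ) * (b (σ 0) j * (b (σ 1) j * b (σ 2) l)) from
        Finset.sum_congr rfl (fun σ _ => by
          rw [map_smul, coeff3_tmul, smul_eq_mul])]
      exact perm_sum_zero b j l
    · simp
    · intro x y _ _ hx hy; rw [map_add, hx, hy, add_zero]
    · intro c x _ hx; rw [map_smul, hx, smul_zero]
  have hcoeff : ∀ (j l : Fin (2 * g)),
      coeff3 (2 * g) j j l (a ⊗ₜ[ℤ] (∑ i : Fin g,
          ((Pi.single (⟨2 * (i : ℕ), by omega⟩ : Fin (2 * g)) 1 : Fin (2 * g) → ℤ)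
              ⊗ₜ[ℤ] (Pi.single (⟨2 * (i : ℕ) + 1, by omega⟩ : Fin (2 * g)) 1) -
            (Pi.single (⟨2 * (i : ℕ) + 1, by omega⟩ : Fin (2 * g)) 1 : Fin (2 * g) → ℤ)
              ⊗ₜ[ℤ] (Pi.single (⟨2 * (i : ℕ), by omega⟩ : Fin (2 * g)) 1))))
        = a j * ∑ i : Fin g,
            ((Pi.single (⟨2 * (i : ℕ), by omega⟩ : Fin (2 * g)) 1 : Fin (2 * g) → ℤ) j *
              (Pi.single (⟨2 * (i : ℕ) + 1, by omega⟩ : Fin (2 * g)) 1 : Fin (2 * g) → ℤ) l -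
             (Pi.single (⟨2 * (i : ℕ) + 1, by omega⟩ : Fin (2 * g)) 1 : Fin (2 * g) → ℤ) j *
              (Pi.single (⟨2 * (i : ℕ), by omega⟩ : Fin (2 * g)) 1 : Fin (2 * g) → ℤ) l) := by
    intro j l
    rw [tmul_sum, map_sum, Finset.mul_sum]
    refine Finset.sum_congr rfl (fun i _ => ?_)
    rw [tmul_sub, map_sub, coeff3_tmul, coeff3_tmul]
    ring
  have ha : a = 0 := by
    funext j
    show a j = 0
    rcases Nat.even_or_odd (j : ℕ) with ⟨i, hi⟩ | ⟨i, hi⟩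
    · -- j = 2i, take l = 2i+1
      have hig : i < g := by omega
      have hl : (2 * i + 1) < 2 * g := by omega
      have key := hvanish j ⟨2 * i + 1, hl⟩
      rw [hcoeff] at key
      rw [Finset.sum_eq_single_of_mem (⟨i, hig⟩ : Fin g) (Finset.mem_univ _)] at key
      · simp only [Pi.single_apply, Fin.ext_iff] at key
        split_ifs at key <;>
          first
            | omega
            | (simp only [mul_one, one_mul, mul_zero, zero_mul, sub_zero, zero_sub,
                neg_zero] at key; omega)
      · intro i' _ hne
        have hv : (i' : ℕ) ≠ i := by
          intro h; exact hne (Fin.ext (by simpa using h))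
        simp only [Pi.single_apply, Fin.ext_iff]
        split_ifs <;> omega
    · -- j = 2i+1, take l = 2i
      have hig : i < g := by omega
      have hl : (2 * i) < 2 * g := by omega
      have key := hvanish j ⟨2 * i, hl⟩
      rw [hcoeff] at key
      rw [Finset.sum_eq_single_of_mem (⟨i, hig⟩ : Fin g) (Finset.mem_univ _)] at key
      · simp only [Pi.single_apply, Fin.ext_iff] at key
        split_ifs at key <;>
          first
            | omega
            | (simp only [mul_one, one_mul, mul_zero, zero_mul, sub_zero, zero_sub,
                neg_zero] at key; omega)
      · intro i' _ hne
        have hv : (i' : ℕ) ≠ i := by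
          intro h; exact hne (Fin.ext (by simpa using h))
        simp only [Pi.single_apply, Fin.ext_iff]
        split_ifs <;> omega
  rw [ha, zero_tmul]
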